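/- Suppose c : [ω₁]² → 2 realizes all patterns, let R be the binary relation with domain and range ω₁ defined by α R β iff α = β, or α < β and c(α,β) = 1, and for X ⊆ ω₁ let R_X be the restriction of R with domain X and range ω₁. Then for every nonempty finite family F of pairwise disjoint uncountable subsets of ω₁, the meet ⋀_{X ∈ F} R_X is not Tukey reducible to ℵ₀·ω₁. -/

import Mathlib

/-- The first uncountable ordinal. -/
noncomputable def omega1 : Ordinal := (Cardinal.aleph 1).ord

/-- The coloring `c : [ω₁]² → 2` realizes all patterns. -/
def RealizesAllPatterns (c : Ordinal → Ordinal → Fin 2) : Prop :=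
  ∀ (k l : ℕ), 0 < k → 0 < l →
    ∀ (A : Set (Fin k → Ordinal)) (B : Set (Fin l → Ordinal)),
      (∀ a ∈ A, StrictMono a ∧ ∀ i, a i < omega1) →
      (∀ b ∈ B, StrictMono b ∧ ∀ j, b j < omega1) →
      (∀ a ∈ A, ∀ a' ∈ A, a ≠ a' → ∀ i i', a i ≠ a' i') →
      (∀ b ∈ B, ∀ b' ∈ B, b ≠ b' → ∀ j j', b j ≠ b' j') →
      ¬ A.Countable → ¬ B.Countable →
      ∀ (χ : Fin k → Fin 2) (π : Fin k → Fin l),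
        ∃ a ∈ A, ∃ b ∈ B, (∀ (i : Fin k) (j : Fin l), a i < b j) ∧
          ∀ i : Fin k, c (a i) (b (π i)) = χ i

/-- The relation `R` on `ω₁`: `α R β` iff `α = β`, or `α < β` and `c(α,β) = 1`. -/
def Rrel (c : Ordinal → Ordinal → Fin 2) (α β : Ordinal) : Prop :=
  α = β ∨ (α < β ∧ c α β = 1)

open Set

namespace Moore

universe u v

lemma lift_omega1 : Ordinal.lift.{v, u} omega1.{u} = omega1.{max u v} := by
  rw [omega1, Cardinal.lift_ord, omega1]
  congr 1
  rw [Cardinal.lift_aleph]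
  norm_num

lemma down_aux {β : Ordinal.{v}} (h : β < omega1.{v}) :
    Ordinal.lift.{u, v} β ∈ Set.range Ordinal.lift.{v, u} := by
  refine Ordinal.mem_range_lift_of_le (a := omega1.{u}) ?_
  rw [lift_omega1.{u, v}]
  refine le_of_lt ?_
  calc Ordinal.lift.{u, v} β < Ordinal.lift.{u, v} omega1.{v} := Ordinal.lift_lt.2 h
  _ = omega1.{max v u} := lift_omega1.{v, u}

/-- Transfer an ordinal below `ω₁` from universe `v` to universe `u`. -/
noncomputable def down (β : Ordinal.{v}) : Ordinal.{u} :=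
  if h : β < omega1.{v} then (down_aux.{u, v} h).choose else 0

lemma lift_down_eq {β : Ordinal.{v}} (h : β < omega1.{v}) :
    Ordinal.lift.{v, u} (down.{u, v} β) = Ordinal.lift.{u, v} β := by
  rw [down, dif_pos h]
  exact (down_aux.{u, v} h).choose_spec

lemma down_lt_omega1 {β : Ordinal.{v}} (h : β < omega1.{v}) : down.{u, v} β < omega1.{u} := by
  rw [← Ordinal.lift_lt.{v, u}, lift_down_eq h, lift_omega1.{u, v}, ← lift_omega1.{v, u}]
  exact Ordinal.lift_lt.2 h

lemma down_le_down_iff {β γ : Ordinal.{v}} (hβ : β < omega1.{v}) (hγ : γ < omega1.{v}) :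
    down.{u, v} β ≤ down.{u, v} γ ↔ β ≤ γ := by
  rw [← Ordinal.lift_le.{v, u} (a := down.{u,v} β), lift_down_eq hβ, lift_down_eq hγ,
    Ordinal.lift_le]

lemma down_inj {β γ : Ordinal.{v}} (hβ : β < omega1.{v}) (hγ : γ < omega1.{v})
    (h : down.{u, v} β = down.{u, v} γ) : β = γ :=
  le_antisymm ((down_le_down_iff hβ hγ).1 h.le) ((down_le_down_iff hγ hβ).1 h.ge)


lemma omega1_isLimit : Order.IsSuccLimit omega1 :=
  Cardinal.isSuccLimit_ord (Cardinal.aleph0_le_aleph 1)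

lemma omega1_pos : 0 < omega1 := omega1_isLimit.pos

lemma lift_aleph_one : Cardinal.lift.{u+1, u} (Cardinal.aleph 1) = Cardinal.aleph 1 := by
  rw [Cardinal.lift_aleph]
  norm_num

lemma countable_Iio {γ : Ordinal.{u}} (h : γ < omega1) : (Set.Iio γ).Countable := by
  rw [Cardinal.countable_iff_lt_aleph_one, Ordinal.mk_Iio_ordinal, ← lift_aleph_one.{u}]
  exact Cardinal.lift_lt.2 (Cardinal.lt_ord.1 h)

lemma countable_Iic {γ : Ordinal} (h : γ < omega1) : (Set.Iic γ).Countable := by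
  have h' : γ + 1 < omega1 := by
    have := omega1_isLimit.succ_lt h
    rwa [Ordinal.add_one_eq_succ]
  exact (countable_Iio h').mono (by intro x hx; exact lt_of_le_of_lt hx (lt_add_one γ))

lemma not_countable_Iio_omega1 : ¬ (Set.Iio omega1.{u}).Countable := by
  rw [Cardinal.countable_iff_lt_aleph_one, Ordinal.mk_Iio_ordinal, ← lift_aleph_one.{u}]
  simp only [omega1, Cardinal.card_ord, lt_self_iff_false, Cardinal.lift_lt, not_false_iff]

/-- An uncountable subset of `Iio ω₁` is unbounded. -/
lemma unbounded_of_not_countable {S : Set Ordinal} (hsub : S ⊆ Set.Iio omega1)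
    (hS : ¬ S.Countable) {γ : Ordinal} (hγ : γ < omega1) : ∃ ξ ∈ S, γ < ξ := by
  by_contra h
  push_neg at h
  exact hS ((countable_Iic hγ).mono (fun x hx => h x hx))

/-- A countable set of ordinals below `ω₁` has a strict upper bound below `ω₁`. -/
lemma exists_bound_of_countable {E : Set Ordinal} (hE : E.Countable)
    (hsub : E ⊆ Set.Iio omega1) : ∃ γ < omega1, ∀ e ∈ E, e < γ := by
  by_contra h
  push_neg at h
  refine not_countable_Iio_omega1 ((hE.biUnion (fun e he => countable_Iic (hsub he))).mono ?_)
  intro x hx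
  obtain ⟨e, he, hxe⟩ := h x hx
  exact Set.mem_biUnion he hxe

/-- Pigeonhole: an uncountable set has an uncountable fiber under a map to a countable type. -/
lemma exists_uncountable_fiber {α : Type*} {ι : Type*} [Countable ι] {S : Set α}
    (hS : ¬ S.Countable) (F : α → ι) : ∃ m, ¬ {x ∈ S | F x = m}.Countable := by
  by_contra h
  push_neg at h
  refine hS ((Set.countable_iUnion (fun m : ι => h m)).mono ?_)
  intro x hx
  exact Set.mem_iUnion.2 ⟨F x, hx, rfl⟩

lemma not_countable_diff {α : Type*} {S E : Set α} (hS : ¬ S.Countable) (hE : E.Countable) :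
    ¬ (S \ E).Countable := by
  intro h
  refine hS (((h.union hE)).mono ?_)
  intro x hx
  by_cases hxE : x ∈ E
  · exact Or.inr hxE
  · exact Or.inl ⟨hx, hxE⟩

lemma countable_of_injOn {α β : Type*} {S : Set α} {E : Set β} (f : α → β)
    (hinj : Set.InjOn f S) (hmaps : ∀ x ∈ S, f x ∈ E) (hE : E.Countable) : S.Countable := by
  obtain ⟨g, hg⟩ := Set.countable_iff_exists_injOn.1 hE
  exact Set.countable_iff_exists_injOn.2 ⟨g ∘ f, fun x hx y hy hxy =>
    hinj hx hy (hg (hmaps x hx) (hmaps y hy) hxy)⟩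

lemma not_countable_image {α β : Type*} {S : Set α} (f : α → β)
    (hinj : Set.InjOn f S) (hS : ¬ S.Countable) : ¬ (f '' S).Countable := fun h =>
  hS (countable_of_injOn f hinj (fun x hx => Set.mem_image_of_mem f hx) h)

/-- Zorn: maximal pairwise-`Q` subfamilies exist. -/
lemma exists_maximal_pairwise {α : Type*} (base : Set α) (Q : α → α → Prop) :
    ∃ T, T ⊆ base ∧ T.Pairwise Q ∧ ∀ T', T' ⊆ base → T'.Pairwise Q → T ⊆ T' → T' = T := by
  have hch : ∀ c ⊆ {T | T ⊆ base ∧ T.Pairwise Q}, IsChain (· ⊆ ·) c →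
      ∃ ub ∈ {T | T ⊆ base ∧ T.Pairwise Q}, ∀ s ∈ c, s ⊆ ub := by
    intro c hc hchain
    refine ⟨⋃₀ c, ⟨?_, ?_⟩, fun s hs => Set.subset_sUnion_of_mem hs⟩
    · exact Set.sUnion_subset (fun t ht => (hc ht).1)
    · intro x hx y hy hxy
      obtain ⟨tx, htx, hxtx⟩ := hx
      obtain ⟨ty, hty, hyty⟩ := hy
      rcases hchain.total htx hty with h | h
      · exact (hc hty).2 (h hxtx) hyty hxy
      · exact (hc htx).2 hxtx (h hyty) hxy
  obtain ⟨M, hM⟩ := zorn_subset {T | T ⊆ base ∧ T.Pairwise Q} hch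
  exact ⟨M, hM.prop.1, hM.prop.2,
    fun T' h1 h2 h3 => subset_antisymm (hM.2 ⟨h1, h2⟩ h3) h3⟩


section Snoc

/-- "snoc" of a strictly monotone tuple with a bigger element is strictly monotone. -/
lemma strictMono_dsnoc {m : ℕ} {t : Fin m → Ordinal} (ht : StrictMono t) {x : Ordinal}
    (hx : ∀ i, t i < x) :
    StrictMono (fun i : Fin (m+1) => if h : i.val < m then t ⟨i.val, h⟩ else x) := by
  intro i j hij
  dsimp only
  by_cases hj : j.val < m
  · have hi : i.val < m := lt_trans hij hj
    rw [dif_pos hi, dif_pos hj]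
    exact ht (show (⟨i.val, hi⟩ : Fin m) < ⟨j.val, hj⟩ from hij)
  · rw [dif_neg hj]
    by_cases hi : i.val < m
    · rw [dif_pos hi]; exact hx _
    · exfalso
      have : i.val = j.val := by omega
      exact absurd (Fin.ext this) (ne_of_lt hij)

end Snoc

section Tuple

variable {n : ℕ} {X : Fin n → Set Ordinal}

/-- Build a strictly increasing tuple with `t i ∈ X i` and all entries above `γ`. -/
lemma exists_tuple (hXsub : ∀ i, X i ⊆ Set.Iio omega1) (hXunc : ∀ i, ¬ (X i).Countable)
    {γ : Ordinal} (hγ : γ < omega1) :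
    ∃ t : Fin n → Ordinal, StrictMono t ∧ (∀ i, t i ∈ X i) ∧ ∀ i, γ < t i := by
  suffices h : ∀ m : ℕ, ∀ hm : m ≤ n,
      ∃ t : Fin m → Ordinal, StrictMono t ∧ (∀ i, t i ∈ X (Fin.castLE hm i)) ∧
        ∀ i, γ < t i by
    obtain ⟨t, h1, h2, h3⟩ := h n le_rfl
    exact ⟨t, h1, fun i => by simpa using h2 i, h3⟩
  intro m
  induction m with
  | zero => exact fun _ => ⟨Fin.elim0, fun i => i.elim0, fun i => i.elim0, fun i => i.elim0⟩
  | succ m ih =>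
    intro hm
    obtain ⟨t, h1, h2, h3⟩ := ih (le_of_lt hm)
    -- find a strict bound for the entries of `t` and `γ`
    have hfin : (insert γ (Set.range t)).Countable :=
      (Set.finite_range t).countable.insert γ
    have hsub : insert γ (Set.range t) ⊆ Set.Iio omega1 := by
      intro x hx
      rcases hx with rfl | ⟨i, rfl⟩
      · exact hγ
      · exact hXsub _ (h2 i)
    obtain ⟨δ, hδ1, hδ2⟩ := exists_bound_of_countable hfin hsub
    obtain ⟨x, hxX, hx⟩ := unbounded_of_not_countable (hXsub ⟨m, hm⟩)
      (hXunc ⟨m, hm⟩) hδ1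
    refine ⟨fun i : Fin (m+1) => if h : i.val < m then t ⟨i.val, h⟩ else x,
      strictMono_dsnoc h1 (fun i => lt_trans (hδ2 _ (Set.mem_insert_of_mem _ ⟨i, rfl⟩)) hx),
      ?_, ?_⟩
    · intro i
      by_cases hi : i.val < m
      · dsimp only; rw [dif_pos hi]
        rw [show Fin.castLE hm i = Fin.castLE (Nat.le_of_succ_le hm) ⟨i.val, hi⟩ from
          Fin.ext rfl]
        exact h2 _
      · dsimp only; rw [dif_neg hi]
        have hiv : i.val = m := by have := i.isLt; omega
        have : Fin.castLE hm i = ⟨m, hm⟩ := Fin.ext (by simp [Fin.coe_castLE, hiv])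
        rw [this]; exact hxX
    · intro i
      by_cases hi : i.val < m
      · dsimp only; rw [dif_pos hi]; exact h3 _
      · dsimp only; rw [dif_neg hi]
        exact lt_trans (hδ2 γ (Set.mem_insert _ _)) hx

/-- There is an uncountable family of strictly increasing tuples, with `i`-th entry in `X i`,
whose members pairwise share no values. -/
lemma exists_big_family (hn : 0 < n) (hXsub : ∀ i, X i ⊆ Set.Iio omega1)
    (hXunc : ∀ i, ¬ (X i).Countable) :
    ∃ 𝒜 : Set (Fin n → Ordinal), ¬ 𝒜.Countable ∧
      (∀ a ∈ 𝒜, StrictMono a ∧ ∀ i, a i ∈ X i) ∧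
      𝒜.Pairwise (fun a a' => ∀ i i', a i ≠ a' i') := by
  obtain ⟨M, hMsub, hMpair, hMmax⟩ := exists_maximal_pairwise
    {a : Fin n → Ordinal | StrictMono a ∧ ∀ i, a i ∈ X i}
    (fun a a' => ∀ i i', a i ≠ a' i')
  refine ⟨M, ?_, fun a ha => hMsub ha, hMpair⟩
  intro hcnt
  have hE : (⋃ a ∈ M, Set.range a).Countable :=
    hcnt.biUnion (fun a _ => (Set.finite_range a).countable)
  have hEsub : (⋃ a ∈ M, Set.range a) ⊆ Set.Iio omega1 := by
    intro x hx
    simp only [Set.mem_iUnion] at hx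
    obtain ⟨a, ha, i, rfl⟩ := hx
    exact hXsub i ((hMsub ha).2 i)
  obtain ⟨δ, hδ1, hδ2⟩ := exists_bound_of_countable hE hEsub
  obtain ⟨t, ht1, ht2, ht3⟩ := exists_tuple hXsub hXunc hδ1
  have htnew : t ∉ M := by
    intro htM
    have : t ⟨0, hn⟩ ∈ ⋃ a ∈ M, Set.range a := Set.mem_biUnion htM ⟨_, rfl⟩
    exact absurd (ht3 ⟨0, hn⟩) (not_lt.2 (le_of_lt (hδ2 _ this)))
  have hQ : ∀ b ∈ M, ∀ i i', t i ≠ b i' := by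
    intro b hb i i' he
    have : b i' ∈ ⋃ a ∈ M, Set.range a := Set.mem_biUnion hb ⟨_, rfl⟩
    exact absurd (ht3 i) (not_lt.2 (le_of_lt (he ▸ hδ2 _ this)))
  have : insert t M = M := by
    refine hMmax _ ?_ ?_ (Set.subset_insert _ _)
    · exact Set.insert_subset ⟨ht1, ht2⟩ hMsub
    · refine hMpair.insert ?_
      intro b hb _
      exact ⟨hQ b hb, fun i i' he => hQ b hb i' i he.symm⟩
  exact htnew (this ▸ Set.mem_insert _ _)

end Tuple

section Rank

/-- The rank of `x` in a finset `s`: the number of elements of `s` below `x`. -/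
noncomputable def rankIn (s : Finset Ordinal) (x : Ordinal) : ℕ := (s.filter (· < x)).card

lemma rank_lt_card {s : Finset Ordinal} {x : Ordinal} (hx : x ∈ s) : rankIn s x < s.card := by
  apply Finset.card_lt_card
  rw [Finset.ssubset_iff_of_subset (Finset.filter_subset _ _)]
  exact ⟨x, hx, by simp⟩

lemma rank_orderEmbOfFin {s : Finset Ordinal} {l : ℕ} (h : s.card = l) (j : Fin l) :
    rankIn s (s.orderEmbOfFin h j) = j.val := by
  have himg : s.filter (· < s.orderEmbOfFin h j)
      = (Finset.Iio j).image (fun j' => s.orderEmbOfFin h j') := by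
    ext y
    simp only [Finset.mem_filter, Finset.mem_image, Finset.mem_Iio]
    constructor
    · rintro ⟨hys, hylt⟩
      have : y ∈ Set.range (s.orderEmbOfFin h) := by
        rw [Finset.range_orderEmbOfFin]; exact hys
      obtain ⟨j', rfl⟩ := this
      exact ⟨j', (s.orderEmbOfFin h).strictMono.lt_iff_lt.1 hylt, rfl⟩
    · rintro ⟨j', hj', rfl⟩
      exact ⟨Finset.orderEmbOfFin_mem _ _ _, (s.orderEmbOfFin h).strictMono hj'⟩
  rw [rankIn, himg, Finset.card_image_of_injective _ (s.orderEmbOfFin h).injective,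
    Fin.card_Iio]

lemma orderEmbOfFin_rankIn {s : Finset Ordinal} {l : ℕ} (h : s.card = l) {x : Ordinal}
    (hx : x ∈ s) : s.orderEmbOfFin h ⟨rankIn s x, lt_of_lt_of_eq (rank_lt_card hx) h⟩ = x := by
  have hxr : x ∈ Set.range (s.orderEmbOfFin h) := by
    rw [Finset.range_orderEmbOfFin]; exact hx
  obtain ⟨j, rfl⟩ := hxr
  have : (⟨rankIn s (s.orderEmbOfFin h j), lt_of_lt_of_eq (rank_lt_card hx) h⟩ : Fin l) = j :=
    Fin.ext (rank_orderEmbOfFin h j)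
  rw [this]

end Rank

section Refine

/-- Refinement: stabilize each coordinate of `G` to be constant or have countable fibers. -/
lemma exists_refined {n : ℕ} (G : Ordinal.{v} → Fin n → Ordinal.{u}) :
    ∃ T, T ⊆ Set.Iio omega1.{v} ∧ ¬ T.Countable ∧ ∀ i : Fin n,
      (∃ γ, ∀ β ∈ T, G β i = γ) ∨ (∀ γ, {β ∈ T | G β i = γ}.Countable) := by
  classical
  suffices h : ∀ s : Finset (Fin n), ∃ T, T ⊆ Set.Iio omega1 ∧ ¬ T.Countable ∧ ∀ i ∈ s,
      (∃ γ, ∀ β ∈ T, G β i = γ) ∨ (∀ γ, {β ∈ T | G β i = γ}.Countable) by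
    obtain ⟨T, h1, h2, h3⟩ := h Finset.univ
    exact ⟨T, h1, h2, fun i => h3 i (Finset.mem_univ i)⟩
  intro s
  induction s using Finset.induction_on with
  | empty => exact ⟨Set.Iio omega1, le_refl _, not_countable_Iio_omega1, by simp⟩
  | insert i s hnotmem ih =>
    obtain ⟨T, h1, h2, h3⟩ := ih
    by_cases hC : ∃ γ, ¬ {β ∈ T | G β i = γ}.Countable
    · obtain ⟨γ, hγ⟩ := hC
      refine ⟨{β ∈ T | G β i = γ}, fun x hx => h1 hx.1, hγ, ?_⟩
      intro j hj
      rcases Finset.mem_insert.1 hj with rfl | hjs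
      · exact Or.inl ⟨γ, fun β hβ => hβ.2⟩
      · rcases h3 j hjs with ⟨δ, hδ⟩ | hcnt
        · exact Or.inl ⟨δ, fun β hβ => hδ β hβ.1⟩
        · refine Or.inr (fun δ => (hcnt δ).mono ?_)
          intro β hβ
          exact ⟨hβ.1.1, hβ.2⟩
    · push_neg at hC
      refine ⟨T, h1, h2, ?_⟩
      intro j hj
      rcases Finset.mem_insert.1 hj with rfl | hjs
      · exact Or.inr hC
      · exact h3 j hjs

end Refine

section Thin

/-- From an uncountable family whose "value sets" have countable multiplicities, extract an
uncountable subfamily with pairwise disjoint value sets. -/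
lemma exists_pairwise_disjoint_subfamily {α : Type*} {S : Set α} (hS : ¬ S.Countable)
    (v : α → Finset Ordinal) (hfib : ∀ e : Ordinal, {x ∈ S | e ∈ v x}.Countable) :
    ∃ S', S' ⊆ S ∧ ¬ S'.Countable ∧ S'.Pairwise (fun x y => Disjoint (v x) (v y)) := by
  obtain ⟨M, hMsub, hMpair, hMmax⟩ := exists_maximal_pairwise S
    (fun x y => Disjoint (v x) (v y))
  refine ⟨M, hMsub, ?_, hMpair⟩
  intro hcnt
  have hE : (⋃ x ∈ M, (v x : Set Ordinal)).Countable :=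
    hcnt.biUnion (fun x _ => (v x).countable_toSet)
  have hbad : (⋃ e ∈ (⋃ x ∈ M, (v x : Set Ordinal)), {x ∈ S | e ∈ v x}).Countable :=
    hE.biUnion (fun e _ => hfib e)
  have hne : (S \ (M ∪ (⋃ e ∈ (⋃ x ∈ M, (v x : Set Ordinal)), {x ∈ S | e ∈ v x}))).Nonempty := by
    rcases Set.eq_empty_or_nonempty
      (S \ (M ∪ (⋃ e ∈ (⋃ x ∈ M, (v x : Set Ordinal)), {x ∈ S | e ∈ v x}))) with he | hne
    · exact absurd (he ▸ Set.countable_empty)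
        (not_countable_diff hS (hcnt.union hbad))
    · exact hne
  obtain ⟨x₀, hx₀⟩ := hne
  have hx₀S : x₀ ∈ S := hx₀.1
  have hx₀M : x₀ ∉ M := fun h => hx₀.2 (Or.inl h)
  have hx₀bad : ∀ e ∈ (⋃ x ∈ M, (v x : Set Ordinal)), e ∉ v x₀ := by
    intro e he hev
    exact hx₀.2 (Or.inr (Set.mem_biUnion he ⟨hx₀S, hev⟩))
  have hins : insert x₀ M = M := by
    refine hMmax _ (Set.insert_subset hx₀S hMsub) ?_ (Set.subset_insert _ _)
    refine hMpair.insert ?_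
    intro y hy _
    have hdisj : Disjoint (v x₀) (v y) := by
      rw [Finset.disjoint_left]
      intro e hex₀ hey
      exact hx₀bad e (Set.mem_biUnion hy hey) hex₀
    exact ⟨hdisj, hdisj.symm⟩
  exact hx₀M (hins ▸ Set.mem_insert _ _)

end Thin

section Crux

/-- Main application of pattern realization: find a tuple in the family and an index `β`
so that the color is `0` along `π` and the `β`-tuple lies entirely above the `a`-tuple. -/
lemma crux {n k l : ℕ} (hk : 0 < k) (hl : 0 < l) (hkn : n ≤ k)
    {c : Ordinal → Ordinal → Fin 2} (hc : RealizesAllPatterns c)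
    (𝒜' : Set (Fin n → Ordinal)) (h𝒜'unc : ¬ 𝒜'.Countable)
    (W : (Fin n → Ordinal) → Fin k → Ordinal)
    (hWmono : ∀ a ∈ 𝒜', StrictMono (W a))
    (hWlt : ∀ a ∈ 𝒜', ∀ i, W a i < omega1)
    (hWpair : ∀ a ∈ 𝒜', ∀ a' ∈ 𝒜', a ≠ a' → ∀ i i', W a i ≠ W a' i')
    {ι : Type*} (T₃ : Set ι) (hT₃unc : ¬ T₃.Countable)
    (U : ι → Fin l → Ordinal)
    (hUmono : ∀ β ∈ T₃, StrictMono (U β))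
    (hUlt : ∀ β ∈ T₃, ∀ j, U β j < omega1)
    (hUpair : ∀ β ∈ T₃, ∀ β' ∈ T₃, β ≠ β' → ∀ j j', U β j ≠ U β' j')
    (π : Fin k → Fin l) :
    ∃ a ∈ 𝒜', ∃ β ∈ T₃, (∀ i j, W a i < U β j) ∧
      ∀ i : Fin k, c (W a i) (U β (π i)) = 0 := by
  have hWinj : Set.InjOn W 𝒜' := by
    intro a ha a' ha' he
    by_contra hne
    exact hWpair a ha a' ha' hne ⟨0, hk⟩ ⟨0, hk⟩ (by rw [he])
  have hUinj : Set.InjOn U T₃ := by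
    intro β hβ β' hβ' he
    by_contra hne
    exact hUpair β hβ β' hβ' hne ⟨0, hl⟩ ⟨0, hl⟩ (by rw [he])
  obtain ⟨a', ha', b, hb, hlt, hcol⟩ := hc k l hk hl (W '' 𝒜') (U '' T₃)
    (by rintro a' ⟨a, ha, rfl⟩; exact ⟨hWmono a ha, hWlt a ha⟩)
    (by rintro b ⟨β, hβ, rfl⟩; exact ⟨hUmono β hβ, hUlt β hβ⟩)
    (by
      rintro a' ⟨a, ha, rfl⟩ a'' ⟨a2, ha2, rfl⟩ hne i i'
      exact hWpair a ha a2 ha2 (fun h => hne (h ▸ rfl)) i i')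
    (by
      rintro b ⟨β, hβ, rfl⟩ b' ⟨β', hβ', rfl⟩ hne j j'
      exact hUpair β hβ β' hβ' (fun h => hne (h ▸ rfl)) j j')
    (not_countable_image W hWinj h𝒜'unc)
    (not_countable_image U hUinj hT₃unc)
    (fun _ => 0) π
  obtain ⟨a, ha, rfl⟩ := ha'
  obtain ⟨β, hβ, rfl⟩ := hb
  exact ⟨a, ha, β, hβ, hlt, hcol⟩

end Crux

end Moore

universe u v

theorem statement14_aux (c : Ordinal.{u} → Ordinal.{u} → Fin 2) (hc : RealizesAllPatterns c)
    (n : ℕ) (hn : 0 < n) (X : Fin n → Set Ordinal.{u})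
    (hXsub : ∀ i, X i ⊆ Set.Iio omega1)
    (hXunc : ∀ i, ¬ (X i).Countable)
    (hXdis : ∀ i j, i ≠ j → Disjoint (X i) (X j)) :
    ¬ ∃ (f : (∀ i : Fin n, X i) → ℕ × {o : Ordinal.{v} // o < omega1})
        (g : ℕ × {o : Ordinal.{v} // o < omega1} → (Fin n → {o : Ordinal.{u} // o < omega1})),
        ∀ (a : ∀ i : Fin n, X i) (p : ℕ × {o : Ordinal.{v} // o < omega1}),
          ((f a).1 = p.1 ∧ (f a).2.val ≤ p.2.val) →
          ∃ i : Fin n, Rrel c (a i).val ((g p) i).val := by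
  classical
  rintro ⟨f, g, H⟩
  -- the base family of tuples
  obtain ⟨𝒜, h𝒜unc, h𝒜mem, h𝒜pair⟩ := Moore.exists_big_family hn hXsub hXunc
  -- `f` as a function of plain tuples
  set fhat : (Fin n → Ordinal.{u}) → ℕ × {o : Ordinal.{v} // o < omega1} :=
    fun a => if h : ∀ i, a i ∈ X i then f (fun i => ⟨a i, h i⟩) else
      (0, ⟨0, Moore.omega1_pos⟩) with hfhat
  set F1 : (Fin n → Ordinal.{u}) → ℕ := fun a => (fhat a).1 with hF1
  set F2 : (Fin n → Ordinal.{u}) → Ordinal.{v} := fun a => (fhat a).2.val with hF2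
  have hF2lt : ∀ a, F2 a < omega1 := fun a => (fhat a).2.2
  set F2' : (Fin n → Ordinal.{u}) → Ordinal.{u} := fun a => Moore.down.{u, v} (F2 a) with hF2'
  have hF2'lt : ∀ a, F2' a < omega1 := fun a => Moore.down_lt_omega1 (hF2lt a)
  -- stabilize the first component of `f`
  obtain ⟨n₀, h𝒜₀unc⟩ := Moore.exists_uncountable_fiber h𝒜unc F1
  set 𝒜₀ : Set (Fin n → Ordinal.{u}) := {a ∈ 𝒜 | F1 a = n₀} with h𝒜₀
  -- the `g`-side function
  set G : Ordinal.{v} → Fin n → Ordinal.{u} :=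
    fun β i => if h : β < omega1 then (g (n₀, ⟨β, h⟩) i).val else 0 with hG
  have hGlt : ∀ β i, G β i < omega1 := by
    intro β i
    by_cases h : β < omega1
    · simp only [hG, dif_pos h]; exact (g (n₀, ⟨β, h⟩) i).2
    · simp only [hG, dif_neg h]; exact Moore.omega1_pos
  -- stabilize the coordinates of `G`
  obtain ⟨T, hTsub, hTunc, hTalt⟩ := Moore.exists_refined G
  set P : Fin n → Prop := fun i => ∃ γ, ∀ β ∈ T, G β i = γ with hP
  set γfun : Fin n → Ordinal.{u} := fun i => if h : P i then h.choose else 0 with hγfun'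
  have hγfun : ∀ i, P i → ∀ β ∈ T, G β i = γfun i := by
    intro i hPi β hβ
    simp only [hγfun', dif_pos hPi]
    exact hPi.choose_spec β hβ
  have hVfib : ∀ i, ¬ P i → ∀ γ, {β ∈ T | G β i = γ}.Countable :=
    fun i hPi => (hTalt i).resolve_left hPi
  set Vfin : Finset (Fin n) := Finset.univ.filter (fun i => ¬ P i) with hVfin
  set Bf : Ordinal.{v} → Finset Ordinal.{u} :=
    fun β => insert (Moore.down.{u, v} β) (Vfin.image (G β)) with hBf
  have hBfmem : ∀ β, Moore.down.{u, v} β ∈ Bf β := fun β => Finset.mem_insert_self _ _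
  have hBfG : ∀ β i, ¬ P i → G β i ∈ Bf β := by
    intro β i hPi
    exact Finset.mem_insert_of_mem (Finset.mem_image_of_mem _ (by simp [hVfin, hPi]))
  have hBflt : ∀ β, β < omega1 → ∀ x ∈ Bf β, x < omega1 := by
    intro β hβ x hx
    rcases Finset.mem_insert.1 hx with rfl | hx
    · exact Moore.down_lt_omega1 hβ
    · obtain ⟨i, _, rfl⟩ := Finset.mem_image.1 hx
      exact hGlt β i
  -- extract a pairwise disjoint subfamily on the `g` side
  have hfib : ∀ e : Ordinal.{u}, {β ∈ T | e ∈ Bf β}.Countable := by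
    intro e
    have hsub : {β ∈ T | e ∈ Bf β} ⊆ {β ∈ T | Moore.down.{u, v} β = e}
        ∪ ⋃ i ∈ (Vfin : Set (Fin n)), {β ∈ T | G β i = e} := by
      rintro β ⟨hβT, hβe⟩
      rcases Finset.mem_insert.1 hβe with rfl | he
      · exact Or.inl ⟨hβT, rfl⟩
      · obtain ⟨i, hi, hie⟩ := Finset.mem_image.1 he
        exact Or.inr (Set.mem_biUnion hi ⟨hβT, hie⟩)
    refine (Set.Countable.union ?_ ?_).mono hsub
    · refine Set.Subsingleton.countable ?_
      rintro β ⟨hβT, hβe⟩ β' ⟨hβT', hβe'⟩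
      exact Moore.down_inj (hTsub hβT) (hTsub hβT') (hβe.trans hβe'.symm)
    · refine Set.Countable.biUnion (Vfin : Set (Fin n)).to_countable ?_
      intro i hi
      have hPi : ¬ P i := by simpa [hVfin] using hi
      exact hVfib i hPi e
  obtain ⟨T₂, hT₂sub, hT₂unc, hT₂pair⟩ :=
    Moore.exists_pairwise_disjoint_subfamily hTunc Bf hfib
  -- stabilize cardinalities and positions
  set Φ : Ordinal.{v} → ℕ × ℕ × (Fin n → ℕ) := fun β =>
    ((Bf β).card, Moore.rankIn (Bf β) (Moore.down.{u, v} β),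
      fun i => if P i then 0 else Moore.rankIn (Bf β) (G β i)) with hΦ
  obtain ⟨⟨l, r₀, ρ⟩, hT₃unc⟩ := Moore.exists_uncountable_fiber hT₂unc Φ
  set T₃ : Set Ordinal.{v} := {β ∈ T₂ | Φ β = (l, r₀, ρ)} with hT₃
  have hT₃T : T₃ ⊆ T := fun β hβ => hT₂sub hβ.1
  have hT₃card : ∀ β ∈ T₃, (Bf β).card = l := fun β hβ => congrArg Prod.fst hβ.2
  have hT₃r : ∀ β ∈ T₃, Moore.rankIn (Bf β) (Moore.down.{u, v} β) = r₀ :=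
    fun β hβ => congrArg (fun x => x.2.1) hβ.2
  have hT₃ρ : ∀ β ∈ T₃, ∀ i, ¬ P i → Moore.rankIn (Bf β) (G β i) = ρ i := by
    intro β hβ i hPi
    have := congrFun (congrArg (fun x => x.2.2) hβ.2) i
    simpa [hΦ, if_neg hPi] using this
  have hT₃ne : T₃.Nonempty := by
    rcases Set.eq_empty_or_nonempty T₃ with he | hne
    · exact absurd (he ▸ Set.countable_empty) hT₃unc
    · exact hne
  obtain ⟨βb, hβb⟩ := hT₃ne
  have hr₀ : r₀ < l := by
    have := Moore.rank_lt_card (hBfmem βb)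
    rw [hT₃r βb hβb, hT₃card βb hβb] at this
    exact this
  have hl : 0 < l := lt_of_le_of_lt (Nat.zero_le _) hr₀
  have hρl : ∀ i, ¬ P i → ρ i < l := by
    intro i hPi
    have := Moore.rank_lt_card (hBfG βb i hPi)
    rw [hT₃ρ βb hβb i hPi, hT₃card βb hβb] at this
    exact this
  -- the sorted enumeration of `Bf β`
  set U : Ordinal.{v} → Fin l → Ordinal.{u} := fun β j =>
    if h : (Bf β).card = l then (Bf β).orderEmbOfFin h j else 0 with hU
  have hUmono : ∀ β ∈ T₃, StrictMono (U β) := by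
    intro β hβ
    have h := hT₃card β hβ
    intro j j' hjj
    simp only [hU, dif_pos h]
    exact ((Bf β).orderEmbOfFin h).strictMono hjj
  have hUmem : ∀ β ∈ T₃, ∀ j, U β j ∈ Bf β := by
    intro β hβ j
    have h := hT₃card β hβ
    simp only [hU, dif_pos h]
    exact Finset.orderEmbOfFin_mem _ _ _
  have hUlt : ∀ β ∈ T₃, ∀ j, U β j < omega1 := by
    intro β hβ j
    exact hBflt β (hTsub (hT₃T hβ)) _ (hUmem β hβ j)
  have hUpair : ∀ β ∈ T₃, ∀ β' ∈ T₃, β ≠ β' → ∀ j j', U β j ≠ U β' j' := by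
    intro β hβ β' hβ' hne j j' he
    have hdis := hT₂pair hβ.1 hβ'.1 hne
    exact Finset.disjoint_left.1 hdis (hUmem β hβ j) (he ▸ hUmem β' hβ' j')
  set j₀ : Fin l := ⟨r₀, hr₀⟩ with hj₀
  have hUβ : ∀ β ∈ T₃, U β j₀ = Moore.down.{u, v} β := by
    intro β hβ
    have h := hT₃card β hβ
    have h2 := Moore.orderEmbOfFin_rankIn h (hBfmem β)
    simp only [hU, dif_pos h]
    rw [show j₀ = ⟨Moore.rankIn (Bf β) (Moore.down.{u, v} β),
      lt_of_lt_of_eq (Moore.rank_lt_card (hBfmem β)) h⟩ from Fin.ext (hT₃r β hβ).symm]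
    exact h2
  have hUG : ∀ β ∈ T₃, ∀ i, ∀ hPi : ¬ P i, U β ⟨ρ i, hρl i hPi⟩ = G β i := by
    intro β hβ i hPi
    have h := hT₃card β hβ
    have h2 := Moore.orderEmbOfFin_rankIn h (hBfG β i hPi)
    simp only [hU, dif_pos h]
    rw [show (⟨ρ i, hρl i hPi⟩ : Fin l) = ⟨Moore.rankIn (Bf β) (G β i),
      lt_of_lt_of_eq (Moore.rank_lt_card (hBfG β i hPi)) h⟩ from Fin.ext (hT₃ρ β hβ i hPi).symm]
    exact h2
  -- a strict bound on the constant values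
  obtain ⟨γ₁, hγ₁lt, hγ₁⟩ : ∃ γ₁ < omega1, ∀ i, P i → γfun i < γ₁ := by
    obtain ⟨γ₁, h1, h2⟩ := Moore.exists_bound_of_countable
      (E := γfun '' {i | P i}) ((Set.toFinite _).countable)
      (by
        rintro x ⟨i, hPi, rfl⟩
        rw [← hγfun i hPi βb (hT₃T hβb)]
        exact hGlt βb i)
    exact ⟨γ₁, h1, fun i hPi => h2 _ ⟨i, hPi, rfl⟩⟩
  -- removing tuples with a small coordinate leaves an uncountable family
  have hsmall : ∀ 𝒮 : Set (Fin n → Ordinal.{u}), 𝒮 ⊆ 𝒜 → ∀ γ, γ < omega1 →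
      {a ∈ 𝒮 | ∃ i, a i ≤ γ}.Countable := by
    intro 𝒮 h𝒮 γ hγ
    refine Moore.countable_of_injOn
      (fun a => if h : ∃ i, a i ≤ γ then a h.choose else 0) ?_ ?_
      (Moore.countable_Iic hγ)
    · rintro x ⟨hx𝒮, hx⟩ y ⟨hy𝒮, hy⟩ he
      by_contra hne
      simp only [dif_pos hx, dif_pos hy] at he
      exact h𝒜pair (h𝒮 hx𝒮) (h𝒮 hy𝒮) hne _ _ he
    · rintro x ⟨hx𝒮, hx⟩
      simp only [dif_pos hx]
      exact hx.choose_spec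
  have hbigset : ∀ 𝒮 : Set (Fin n → Ordinal.{u}), 𝒮 ⊆ 𝒜 → ¬ 𝒮.Countable → ∀ γ, γ < omega1 →
      ¬ {a ∈ 𝒮 | ∀ i, γ < a i}.Countable := by
    intro 𝒮 h𝒮 h𝒮unc γ hγ hcnt
    refine h𝒮unc ((hcnt.union (hsmall 𝒮 h𝒮 γ hγ)).mono ?_)
    intro a ha
    by_cases hb : ∀ i, γ < a i
    · exact Or.inl ⟨ha, hb⟩
    · push_neg at hb
      obtain ⟨i, hi⟩ := hb
      exact Or.inr ⟨ha, i, hi⟩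
  -- package the two cases on the `f`-side
  obtain ⟨k, hk0, hkn, W, 𝒜₄, h𝒜₄sub, h𝒜₄n₀, h𝒜₄unc, hWmono, hWlt, hWpair, hWemb, hWF2,
      h𝒜₄big⟩ :
      ∃ (k : ℕ) (hk0 : 0 < k) (hkn : n ≤ k) (W : (Fin n → Ordinal.{u}) → Fin k → Ordinal.{u})
        (𝒜₄ : Set (Fin n → Ordinal.{u})),
        𝒜₄ ⊆ 𝒜 ∧ (∀ a ∈ 𝒜₄, F1 a = n₀) ∧ ¬ 𝒜₄.Countable ∧
        (∀ a ∈ 𝒜₄, StrictMono (W a)) ∧ (∀ a ∈ 𝒜₄, ∀ i, W a i < omega1) ∧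
        (∀ a ∈ 𝒜₄, ∀ a' ∈ 𝒜₄, a ≠ a' → ∀ i i', W a i ≠ W a' i') ∧
        (∀ a ∈ 𝒜₄, ∀ i : Fin n, a i = W a (Fin.castLE hkn i)) ∧
        (∀ a ∈ 𝒜₄, F2' a ≤ W a ⟨k-1, by omega⟩) ∧
        (∀ a ∈ 𝒜₄, ∀ i, P i → γfun i < a i) := by
    by_cases hcase : ∃ δ, ¬ {a ∈ 𝒜₀ | F2 a = δ}.Countable
    · -- Case I : `F2` is constant on an uncountable subfamily
      obtain ⟨δ, hδunc⟩ := hcase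
      have hδne : {a ∈ 𝒜₀ | F2 a = δ}.Nonempty := by
        rcases Set.eq_empty_or_nonempty {a ∈ 𝒜₀ | F2 a = δ} with he | hne
        · exact absurd (he ▸ Set.countable_empty) hδunc
        · exact hne
      obtain ⟨a₀, _, ha₀δ⟩ := hδne
      have hδlt : δ < omega1 := ha₀δ ▸ hF2lt a₀
      have hgmax : max γ₁ (Moore.down.{u, v} δ) < omega1 :=
        max_lt hγ₁lt (Moore.down_lt_omega1 hδlt)
      have h𝒜₄unc := hbigset {a ∈ 𝒜₀ | F2 a = δ} (fun a ha => ha.1.1) hδunc _ hgmax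
      refine ⟨n, hn, le_rfl, fun a => a, _, ?_, ?_, h𝒜₄unc, ?_, ?_, ?_, ?_, ?_, ?_⟩
      · exact fun a ha => ha.1.1.1
      · exact fun a ha => ha.1.1.2
      · exact fun a ha => (h𝒜mem a ha.1.1.1).1
      · exact fun a ha i => hXsub i ((h𝒜mem a ha.1.1.1).2 i)
      · exact fun a ha a' ha' hne => h𝒜pair ha.1.1.1 ha'.1.1.1 hne
      · exact fun a _ i => congrArg a (Fin.ext rfl)
      · intro a ha
        have he : F2' a = Moore.down.{u, v} δ := by
          show Moore.down.{u, v} (F2 a) = _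
          rw [ha.1.2]
        rw [he]
        exact le_of_lt (lt_of_le_of_lt (le_max_right _ _) (ha.2 ⟨n-1, by omega⟩))
      · intro a ha i hPi
        exact lt_trans (lt_of_lt_of_le (hγ₁ i hPi) (le_max_left _ _)) (ha.2 i)
    · -- Case II : all fibers of `F2` are countable
      push_neg at hcase
      have hfibA : ∀ e : Ordinal.{u}, {a ∈ 𝒜₀ | e ∈ (insert (F2' a)
          (Finset.image a Finset.univ) : Finset Ordinal.{u})}.Countable := by
        intro e
        have hsub : {a ∈ 𝒜₀ | e ∈ (insert (F2' a) (Finset.image a Finset.univ) :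
            Finset Ordinal.{u})} ⊆
            {a ∈ 𝒜₀ | F2' a = e} ∪ {a ∈ 𝒜₀ | ∃ i, a i = e} := by
          rintro a ⟨ha₀, he⟩
          rcases Finset.mem_insert.1 he with he | he
          · exact Or.inl ⟨ha₀, he.symm⟩
          · obtain ⟨i, _, hie⟩ := Finset.mem_image.1 he
            exact Or.inr ⟨ha₀, i, hie⟩
        refine (Set.Countable.union ?_ ?_).mono hsub
        · rcases Set.eq_empty_or_nonempty {a ∈ 𝒜₀ | F2' a = e} with hemp | ⟨a₀, ha₀⟩
          · rw [hemp]; exact Set.countable_empty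
          · refine (hcase (F2 a₀)).mono ?_
            rintro a ⟨haA, hae⟩
            exact ⟨haA, Moore.down_inj (hF2lt a) (hF2lt a₀) (hae.trans ha₀.2.symm)⟩
        · refine Set.Subsingleton.countable ?_
          rintro a ⟨haA, i, hie⟩ a' ⟨haA', i', hie'⟩
          by_contra hne
          exact h𝒜pair haA.1 haA'.1 hne i i' (hie.trans hie'.symm)
      obtain ⟨𝒜₁, h𝒜₁sub, h𝒜₁unc, h𝒜₁pair⟩ :=
        Moore.exists_pairwise_disjoint_subfamily h𝒜₀unc
          (fun a => insert (F2' a) (Finset.image a Finset.univ)) hfibA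
      have h𝒜₂unc := hbigset 𝒜₁ (fun a ha => (h𝒜₁sub ha).1) h𝒜₁unc γ₁ hγ₁lt
      set 𝒜₂ : Set (Fin n → Ordinal.{u}) := {a ∈ 𝒜₁ | ∀ i, γ₁ < a i} with h𝒜₂
      set lastn : Fin n := ⟨n-1, by omega⟩ with hlastn
      by_cases hsplit : ¬ {a ∈ 𝒜₂ | F2' a ≤ a lastn}.Countable
      · -- shape I : the extra value is dominated by the top entry
        refine ⟨n, hn, le_rfl, fun a => a, _, ?_, ?_, hsplit, ?_, ?_, ?_, ?_, ?_, ?_⟩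
        · exact fun a ha => (h𝒜₁sub ha.1.1).1
        · exact fun a ha => (h𝒜₁sub ha.1.1).2
        · exact fun a ha => (h𝒜mem a (h𝒜₁sub ha.1.1).1).1
        · exact fun a ha i => hXsub i ((h𝒜mem a (h𝒜₁sub ha.1.1).1).2 i)
        · exact fun a ha a' ha' hne => h𝒜pair (h𝒜₁sub ha.1.1).1 (h𝒜₁sub ha'.1.1).1 hne
        · exact fun a _ i => congrArg a (Fin.ext rfl)
        · exact fun a ha => ha.2
        · exact fun a ha i hPi => lt_trans (hγ₁ i hPi) (ha.1.2 i)
      · -- shape II : append the extra value at the end of the tuple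
        have h𝒜₄unc : ¬ {a ∈ 𝒜₂ | a lastn < F2' a}.Countable := by
          intro hcnt
          rw [not_not] at hsplit
          refine h𝒜₂unc ((hsplit.union hcnt).mono ?_)
          intro a ha
          rcases le_or_gt (F2' a) (a lastn) with hle | hlt
          · exact Or.inl ⟨ha, hle⟩
          · exact Or.inr ⟨ha, hlt⟩
        have hmem𝒜 : ∀ a ∈ {a ∈ 𝒜₂ | a lastn < F2' a}, a ∈ 𝒜 :=
          fun a ha => (h𝒜₁sub ha.1.1).1
        have habove : ∀ a ∈ {a ∈ 𝒜₂ | a lastn < F2' a}, ∀ i, a i < F2' a := by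
          intro a ha i
          refine lt_of_le_of_lt ?_ ha.2
          refine ((h𝒜mem a (hmem𝒜 a ha)).1).monotone (Fin.le_def.2 ?_)
          show i.val ≤ n - 1
          have := i.isLt
          omega
        refine ⟨n + 1, by omega, by omega,
          fun a => fun i' => if h : i'.val < n then a ⟨i'.val, h⟩ else F2' a, _,
          ?_, ?_, h𝒜₄unc, ?_, ?_, ?_, ?_, ?_, ?_⟩
        · exact hmem𝒜
        · exact fun a ha => (h𝒜₁sub ha.1.1).2
        · intro a ha
          exact Moore.strictMono_dsnoc ((h𝒜mem a (hmem𝒜 a ha)).1) (habove a ha)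
        · intro a ha i
          dsimp only
          by_cases h : i.val < n
          · rw [dif_pos h]
            exact hXsub _ ((h𝒜mem a (hmem𝒜 a ha)).2 _)
          · rw [dif_neg h]
            exact hF2'lt a
        · intro a ha a' ha' hne i i'
          have hdis := h𝒜₁pair ha.1.1 ha'.1.1 hne
          have hmem1 : (if h : i.val < n then a ⟨i.val, h⟩ else F2' a) ∈
              insert (F2' a) (Finset.image a Finset.univ) := by
            by_cases h : i.val < n
            · simp only [dif_pos h]
              exact Finset.mem_insert_of_mem (Finset.mem_image_of_mem _ (Finset.mem_univ _))
            · simp only [dif_neg h]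
              exact Finset.mem_insert_self _ _
          have hmem2 : (if h : i'.val < n then a' ⟨i'.val, h⟩ else F2' a') ∈
              insert (F2' a') (Finset.image a' Finset.univ) := by
            by_cases h : i'.val < n
            · simp only [dif_pos h]
              exact Finset.mem_insert_of_mem (Finset.mem_image_of_mem _ (Finset.mem_univ _))
            · simp only [dif_neg h]
              exact Finset.mem_insert_self _ _
          intro he
          have he' : (if h : i.val < n then a ⟨i.val, h⟩ else F2' a)
              = (if h : i'.val < n then a' ⟨i'.val, h⟩ else F2' a') := he
          rw [← he'] at hmem2
          exact Finset.disjoint_left.1 hdis hmem1 hmem2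
        · intro a _ i
          dsimp only
          rw [dif_pos (show (Fin.castLE (by omega : n ≤ n + 1) i).val < n from i.isLt)]
          exact congrArg a (Fin.ext rfl)
        · intro a _
          dsimp only
          rw [dif_neg (show ¬ ((⟨n + 1 - 1, by omega⟩ : Fin (n + 1)).val < n) by simp)]
        · exact fun a ha i hPi => lt_trans (hγ₁ i hPi) (ha.1.2 i)
  -- the final pattern
  set π : Fin k → Fin l := fun i' =>
    if h : i'.val < n then
      (if hPi : P ⟨i'.val, h⟩ then j₀ else ⟨ρ ⟨i'.val, h⟩, hρl _ hPi⟩)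
    else j₀ with hπ
  obtain ⟨a, ha, β, hβ, hlt, hcol⟩ := Moore.crux hk0 hl hkn hc 𝒜₄ h𝒜₄unc W
    hWmono hWlt hWpair T₃ hT₃unc U hUmono hUlt hUpair π
  have hβlt : β < omega1 := hTsub (hT₃T hβ)
  have haX : ∀ i, a i ∈ X i := (h𝒜mem a (h𝒜₄sub ha)).2
  have hfa : fhat a = f (fun i => ⟨a i, haX i⟩) := by
    simp only [hfhat]
    rw [dif_pos haX]
  have hcond1 : (f (fun i => ⟨a i, haX i⟩)).1 = n₀ := by
    rw [← hfa]
    exact h𝒜₄n₀ a ha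
  have hcond2 : (f (fun i => ⟨a i, haX i⟩)).2.val ≤ β := by
    rw [← hfa]
    have h1 : F2' a ≤ W a ⟨k-1, by omega⟩ := hWF2 a ha
    have h2 : W a ⟨k-1, by omega⟩ < U β j₀ := hlt _ _
    rw [hUβ β hβ] at h2
    have h3 : Moore.down.{u, v} (F2 a) ≤ Moore.down.{u, v} β := le_of_lt (lt_of_le_of_lt h1 h2)
    exact (Moore.down_le_down_iff (hF2lt a) hβlt).1 h3
  obtain ⟨i, hR⟩ := H (fun i => ⟨a i, haX i⟩) (n₀, ⟨β, hβlt⟩) ⟨hcond1, hcond2⟩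
  have hgp : ((g (n₀, ⟨β, hβlt⟩)) i).val = G β i := by
    simp only [hG, dif_pos hβlt]
  simp only [hgp] at hR
  by_cases hPi : P i
  · have hGc : G β i = γfun i := hγfun i hPi β (hT₃T hβ)
    have hbig : γfun i < a i := h𝒜₄big a ha i hPi
    rcases hR with he | ⟨hlt', _⟩
    · rw [hGc] at he; exact absurd he (ne_of_gt hbig)
    · rw [hGc] at hlt'; exact absurd hlt' (not_lt.2 (le_of_lt hbig))
  · have hGU : G β i = U β ⟨ρ i, hρl i hPi⟩ := (hUG β hβ i hPi).symm
    have hπi : π (Fin.castLE hkn i) = ⟨ρ i, hρl i hPi⟩ := by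
      simp only [hπ]
      rw [dif_pos (show (Fin.castLE hkn i).val < n from i.isLt)]
      rw [show (⟨(Fin.castLE hkn i).val, i.isLt⟩ : Fin n) = i from Fin.ext rfl]
      rw [dif_neg hPi]
    have hcoli := hcol (Fin.castLE hkn i)
    rw [hπi, ← hWemb a ha i] at hcoli
    rcases hR with he | ⟨_, hc1⟩
    · rw [hGU] at he
      have hlt2 := hlt (Fin.castLE hkn i) ⟨ρ i, hρl i hPi⟩
      rw [← hWemb a ha i] at hlt2
      exact absurd he (ne_of_lt hlt2)
    · rw [hGU] at hc1
      rw [hcoli] at hc1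
      exact absurd hc1 (by decide)


/-- **Theorem (Moore).** If `c` realizes all patterns, then for every nonempty
finite family `F = (X i)_{i < n}` of pairwise disjoint uncountable subsets of
`ω₁`, the meet `⋀_{i} R_{X i}` (with domain `∏ i, X i`, range `∏ i, ω₁`, where a
tuple `a` is related to a tuple `y` iff `a i R y i` for at least one `i`) is not
Tukey reducible to `ℵ₀·ω₁`. -/
theorem statement14 (c : Ordinal → Ordinal → Fin 2) (hc : RealizesAllPatterns c)
    (n : ℕ) (hn : 0 < n) (X : Fin n → Set Ordinal)
    (hXsub : ∀ i, X i ⊆ Set.Iio omega1)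
    (hXunc : ∀ i, ¬ (X i).Countable)
    (hXdis : ∀ i j, i ≠ j → Disjoint (X i) (X j)) :
    ¬ ∃ (f : (∀ i : Fin n, X i) → ℕ × {o : Ordinal // o < omega1})
        (g : ℕ × {o : Ordinal // o < omega1} → (Fin n → {o : Ordinal // o < omega1})),
        ∀ (a : ∀ i : Fin n, X i) (p : ℕ × {o : Ordinal // o < omega1}),
          ((f a).1 = p.1 ∧ (f a).2.val ≤ p.2.val) →
          ∃ i : Fin n, Rrel c (a i).val ((g p) i).val :=
  statement14_aux c hc n hn X hXsub hXunc hXdis
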